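/- Let a ∈ PB be a basis of the integer polymatroid P. An index i ∈ [n] is internally active with respect to a if and only if there exists a nonempty subset I ⊆ [n] such that i = min(I) and the complement [n] ∖ I is tight for a. -/

import Mathlib

open Finset

variable {n : ℕ}

/-- The set of bases of the integer polymatroid with rank function `f` on ground set `Fin n`:
integer vectors `a` with `a i ≥ 0`, `∑_{i ∈ I} a i ≤ f I` for every `I`, and `∑ i, a i = f [n]`.
(The upper bound `a i ≤ f {i}` used for the ambient finite set is implied by the constraints.) -/
noncomputable def PB (n : ℕ) (f : Finset (Fin n) → ℕ) : Finset (Fin n → ℤ) :=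
  (Fintype.piFinset fun i : Fin n => Finset.Icc (0 : ℤ) (f {i})).filter fun a =>
    (∀ I : Finset (Fin n), ∑ j ∈ I, a j ≤ (f I : ℤ)) ∧ ∑ j, a j = (f Finset.univ : ℤ)

/-- A set `I` is tight for `a` if `∑_{i ∈ I} a i = f I`. -/
def Tight (f : Finset (Fin n) → ℕ) (a : Fin n → ℤ) (I : Finset (Fin n)) : Prop :=
  ∑ i ∈ I, a i = (f I : ℤ)

/-- `i` is internally active with respect to `a`: `a - e_i + e_j ∉ PB` for every `j < i`. -/
def IntAct (f : Finset (Fin n) → ℕ) (a : Fin n → ℤ) (i : Fin n) : Prop :=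
  ∀ j : Fin n, j < i → a - Pi.single i 1 + Pi.single j 1 ∉ PB n f

/-- `i` is externally active with respect to `a`: `a + e_i - e_j ∉ PB` for every `j < i`. -/
def ExtAct (f : Finset (Fin n) → ℕ) (a : Fin n → ℤ) (i : Fin n) : Prop :=
  ∀ j : Fin n, j < i → a + Pi.single i 1 - Pi.single j 1 ∉ PB n f

open scoped Classical in
/-- `Int(a)`: the set of internally active indices. -/
noncomputable def IntSet (f : Finset (Fin n) → ℕ) (a : Fin n → ℤ) : Finset (Fin n) :=
  Finset.univ.filter fun i => IntAct f a i

open scoped Classical in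
/-- `Ext(a)`: the set of externally active indices. -/
noncomputable def ExtSet (f : Finset (Fin n) → ℕ) (a : Fin n → ℤ) : Finset (Fin n) :=
  Finset.univ.filter fun i => ExtAct f a i

/-- `ι(a) = |Int(a)|`, the internal activity. -/
noncomputable def iota (f : Finset (Fin n) → ℕ) (a : Fin n → ℤ) : ℕ := (IntSet f a).card

/-- `ε(a) = |Ext(a)|`, the external activity. -/
noncomputable def eps (f : Finset (Fin n) → ℕ) (a : Fin n → ℤ) : ℕ := (ExtSet f a).card

lemma mem_PB_iff (f : Finset (Fin n) → ℕ) (b : Fin n → ℤ) :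
    b ∈ PB n f ↔ (∀ k, 0 ≤ b k ∧ b k ≤ (f {k} : ℤ)) ∧
      (∀ I : Finset (Fin n), ∑ j ∈ I, b j ≤ (f I : ℤ)) ∧
      ∑ j, b j = (f Finset.univ : ℤ) := by
  simp [PB, Fintype.mem_piFinset, Finset.mem_Icc]

lemma sum_shift (a : Fin n → ℤ) (i j : Fin n) (J : Finset (Fin n)) :
    ∑ k ∈ J, ((a - Pi.single i 1 + Pi.single j 1 : Fin n → ℤ)) k
      = ∑ k ∈ J, a k - (if i ∈ J then 1 else 0) + (if j ∈ J then 1 else 0) := by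
  simp only [Pi.add_apply, Pi.sub_apply, Finset.sum_add_distrib, Finset.sum_sub_distrib,
    Finset.sum_pi_single']

lemma tight_union (f : Finset (Fin n) → ℕ) (a : Fin n → ℤ)
    (hsub : ∀ I J : Finset (Fin n), f (I ∪ J) + f (I ∩ J) ≤ f I + f J)
    (hle : ∀ I : Finset (Fin n), ∑ j ∈ I, a j ≤ (f I : ℤ))
    {A B : Finset (Fin n)} (hA : Tight f a A) (hB : Tight f a B) :
    Tight f a (A ∪ B) := by
  have h1 := hle (A ∪ B)
  have h2 := hle (A ∩ B)
  have h3 : ∑ j ∈ A ∪ B, a j + ∑ j ∈ A ∩ B, a j = ∑ j ∈ A, a j + ∑ j ∈ B, a j :=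
    Finset.sum_union_inter
  have h4 : (f (A ∪ B) : ℤ) + (f (A ∩ B) : ℤ) ≤ (f A : ℤ) + (f B : ℤ) := by
    exact_mod_cast hsub A B
  unfold Tight at *
  linarith

lemma exists_tight_sup (f : Finset (Fin n) → ℕ) (a : Fin n → ℤ) (i : Fin n)
    (hf0 : f ∅ = 0)
    (hsub : ∀ I J : Finset (Fin n), f (I ∪ J) + f (I ∩ J) ≤ f I + f J)
    (hle : ∀ I : Finset (Fin n), ∑ j ∈ I, a j ≤ (f I : ℤ))
    (K : Finset (Fin n))
    (h : ∀ j ∈ K, ∃ S : Finset (Fin n), j ∈ S ∧ i ∉ S ∧ Tight f a S) :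
    ∃ S : Finset (Fin n), K ⊆ S ∧ i ∉ S ∧ Tight f a S := by
  classical
  induction K using Finset.induction_on with
  | empty => exact ⟨∅, by simp, by simp, by simp [Tight, hf0]⟩
  | insert x K' hx ih =>
    obtain ⟨S', hKS', hiS', htS'⟩ := ih fun j hj => h j (Finset.mem_insert_of_mem hj)
    obtain ⟨Sx, hxSx, hiSx, htSx⟩ := h x (Finset.mem_insert_self _ _)
    refine ⟨Sx ∪ S', ?_, by simp [hiS', hiSx], tight_union f a hsub hle htSx htS'⟩
    intro k hk
    rcases Finset.mem_insert.mp hk with rfl | hk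
    · exact Finset.mem_union_left _ hxSx
    · exact Finset.mem_union_right _ (hKS' hk)

/-- `i` is internally active w.r.t. `a` iff there is a (nonempty) subset `I` with
`i = min I` whose complement is tight for `a`. -/
theorem internallyActive_iff
    (n : ℕ) (hn : 0 < n) (f : Finset (Fin n) → ℕ)
    (hf0 : f ∅ = 0)
    (hmono : ∀ I J : Finset (Fin n), I ⊆ J → f I ≤ f J)
    (hsub : ∀ I J : Finset (Fin n), f (I ∪ J) + f (I ∩ J) ≤ f I + f J)
    (a : Fin n → ℤ) (ha : a ∈ PB n f) (i : Fin n) :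
    IntAct f a i ↔
      ∃ I : Finset (Fin n), i ∈ I ∧ (∀ j ∈ I, i ≤ j) ∧ Tight f a Iᶜ := by
  classical
  rw [mem_PB_iff] at ha
  obtain ⟨hbox, hle, hsum⟩ := ha
  constructor
  · intro hact
    by_cases hai : a i ≤ 0
    · -- a i = 0 : take I = {i}
      refine ⟨{i}, Finset.mem_singleton_self i, by simp, ?_⟩
      have hai0 : a i = 0 := le_antisymm hai (hbox i).1
      have h1 : ∑ j ∈ ({i} : Finset (Fin n))ᶜ, a j + ∑ j ∈ ({i} : Finset (Fin n)), a j
          = ∑ j, a j := Finset.sum_compl_add_sum _ _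
      have h2 := hle ({i} : Finset (Fin n))ᶜ
      have h3 : (f ({i} : Finset (Fin n))ᶜ : ℤ) ≤ (f Finset.univ : ℤ) := by
        exact_mod_cast hmono _ _ (Finset.subset_univ _)
      simp only [Finset.sum_singleton, hai0] at h1
      unfold Tight
      linarith
    · -- a i ≥ 1
      push_neg at hai
      have key : ∀ j : Fin n, j < i → ∃ S : Finset (Fin n), j ∈ S ∧ i ∉ S ∧ Tight f a S := by
        intro j hj
        have hij : j ≠ i := ne_of_lt hj
        by_cases haj : a j = (f {j} : ℤ)
        · exact ⟨{j}, Finset.mem_singleton_self j,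
            by simp [hij.symm, Ne.symm hij], by simpa [Tight] using haj⟩
        · have hajlt : a j < (f {j} : ℤ) := lt_of_le_of_ne (hbox j).2 haj
          have hb := hact j hj
          rw [mem_PB_iff] at hb
          push_neg at hb
          set b : Fin n → ℤ := a - Pi.single i 1 + Pi.single j 1 with hbdef
          have hbk : ∀ k, b k = a k - (if k = i then 1 else 0) + (if k = j then 1 else 0) := by
            intro k
            simp [hbdef, Pi.single_apply]
          have hbi : b i = a i - 1 := by rw [hbk]; simp [Ne.symm hij]
          have hbj : b j = a j + 1 := by rw [hbk]; simp [hij]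
          have hbo : ∀ k, k ≠ i → k ≠ j → b k = a k := by
            intro k h1 h2; rw [hbk]; simp [h1, h2]
          have hbox' : ∀ k, 0 ≤ b k ∧ b k ≤ (f {k} : ℤ) := by
            intro k
            rcases eq_or_ne k i with rfl | h1
            · rw [hbi]
              exact ⟨by linarith, by have := (hbox k).2; linarith⟩
            · rcases eq_or_ne k j with rfl | h2
              · rw [hbj]
                exact ⟨by have := (hbox k).1; linarith, by linarith⟩
              · rw [hbo k h1 h2]; exact hbox k
          have hsum' : ∑ k, b k = (f Finset.univ : ℤ) := by
            rw [sum_shift]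
            simp [hsum, hij]
          have hexJ : ∃ J : Finset (Fin n), ¬ ∑ k ∈ J, b k ≤ (f J : ℤ) := by
            by_contra hall
            push_neg at hall
            exact hb hbox' hall hsum'
          obtain ⟨J, hJ⟩ := hexJ
          -- hJ : ¬ ∑ k ∈ J, b k ≤ f J, i.e. f J < ∑
          have hJlt : (f J : ℤ) < ∑ k ∈ J, b k := lt_of_not_ge hJ
          rw [sum_shift] at hJlt
          have hleJ := hle J
          by_cases hjJ : j ∈ J
          · by_cases hiJ : i ∈ J
            · simp [hjJ, hiJ] at hJlt; linarith
            · refine ⟨J, hjJ, hiJ, ?_⟩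
              simp [hjJ, hiJ] at hJlt
              unfold Tight
              linarith
          · simp [hjJ] at hJlt
            by_cases hiJ : i ∈ J <;> simp [hiJ] at hJlt <;> linarith
      obtain ⟨S, hKS, hiS, htS⟩ := exists_tight_sup f a i hf0 hsub hle
        (Finset.univ.filter fun j => j < i)
        (fun j hj => key j (Finset.mem_filter.mp hj).2)
      refine ⟨Sᶜ, Finset.mem_compl.mpr hiS, ?_, by rwa [compl_compl]⟩
      intro j hjS
      by_contra hij
      push_neg at hij
      exact (Finset.mem_compl.mp hjS) (hKS (Finset.mem_filter.mpr ⟨Finset.mem_univ _, hij⟩))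
  · rintro ⟨I, hiI, hmin, htight⟩ j hj hb
    rw [mem_PB_iff] at hb
    have hjI : j ∈ Iᶜ := Finset.mem_compl.mpr fun hjIn => absurd (hmin j hjIn) (not_le.mpr hj)
    have hiIc : i ∉ Iᶜ := fun h => (Finset.mem_compl.mp h) hiI
    have := hb.2.1 Iᶜ
    rw [sum_shift] at this
    simp [hjI, hiIc] at this
    unfold Tight at htight
    linarith
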